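/- For the step-function source R₁ = indicator of [-4, 8] and Green function tanh(|x - x₁|/√2), the potential V₁(x) = ∫_{-4}^{8} tanh(|x - x₁|/√2) dx₁ equals √2·log( (1/4)(e^{√2(x-8)} + 1)(e^{√2(x+4)} + 1) ) - 2(x - 2) for -4 ≤ x ≤ 8. -/

import Mathlib

private lemma continuous_tanh' : Continuous Real.tanh := by
  have h : Real.tanh = fun x => Real.sinh x / Real.cosh x := funext Real.tanh_eq_sinh_div_cosh
  rw [h]
  exact Real.continuous_sinh.div Real.continuous_cosh fun x => (Real.cosh_pos x).ne'

theorem stmt_15 (V₁ : ℝ → ℝ)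
    (hV : ∀ x, V₁ x = ∫ x₁ in Set.Icc (-4 : ℝ) 8, Real.tanh (|x - x₁| / Real.sqrt 2)) :
    ∀ x : ℝ, -4 ≤ x → x ≤ 8 →
      V₁ x = Real.sqrt 2 * Real.log
        ((1 / 4) * (Real.exp (Real.sqrt 2 * (x - 8)) + 1) *
          (Real.exp (Real.sqrt 2 * (x + 4)) + 1)) - 2 * (x - 2) := by
  intro x hx1 hx2
  have hs0 : (0:ℝ) < Real.sqrt 2 := Real.sqrt_pos.mpr (by norm_num)
  have hss : Real.sqrt 2 * Real.sqrt 2 = 2 := Real.mul_self_sqrt (by norm_num)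
  rw [hV, MeasureTheory.integral_Icc_eq_integral_Ioc,
    ← intervalIntegral.integral_of_le (by linarith : (-4:ℝ) ≤ 8)]
  have hcont : ∀ a b : ℝ, IntervalIntegrable
      (fun x₁ => Real.tanh (|x - x₁| / Real.sqrt 2)) MeasureTheory.volume a b := by
    intro a b
    exact (continuous_tanh'.comp
      ((continuous_abs.comp (continuous_const.sub continuous_id)).div_const _)).intervalIntegrable a b
  rw [← intervalIntegral.integral_add_adjacent_intervals (hcont (-4) x) (hcont x 8)]
  have h1 : (∫ t in (-4:ℝ)..x, Real.tanh (|x - t| / Real.sqrt 2))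
      = ∫ t in (-4:ℝ)..x, Real.tanh ((x - t) / Real.sqrt 2) := by
    apply intervalIntegral.integral_congr
    intro t ht
    rw [Set.uIcc_of_le (by linarith)] at ht
    show Real.tanh (|x - t| / Real.sqrt 2) = Real.tanh ((x - t) / Real.sqrt 2)
    rw [abs_of_nonneg (by linarith [ht.2] : (0:ℝ) ≤ x - t)]
  have h2 : (∫ t in x..(8:ℝ), Real.tanh (|x - t| / Real.sqrt 2))
      = ∫ t in x..(8:ℝ), Real.tanh ((t - x) / Real.sqrt 2) := by
    apply intervalIntegral.integral_congr
    intro t ht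
    rw [Set.uIcc_of_le (by linarith)] at ht
    show Real.tanh (|x - t| / Real.sqrt 2) = Real.tanh ((t - x) / Real.sqrt 2)
    rw [abs_of_nonpos (by linarith [ht.1] : x - t ≤ 0), neg_sub]
  rw [h1, h2]
  have F1 : (∫ t in (-4:ℝ)..x, Real.tanh ((x - t) / Real.sqrt 2))
      = Real.sqrt 2 * Real.log (Real.cosh ((x + 4) / Real.sqrt 2)) := by
    have hderiv : ∀ t ∈ Set.uIcc (-4:ℝ) x,
        HasDerivAt (fun t => -(Real.sqrt 2 * Real.log (Real.cosh ((x - t) / Real.sqrt 2))))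
          (Real.tanh ((x - t) / Real.sqrt 2)) t := by
      intro t _
      have hinner : HasDerivAt (fun t : ℝ => (x - t) / Real.sqrt 2)
          (-1 / Real.sqrt 2) t := by
        simpa using ((hasDerivAt_id t).const_sub x).div_const (Real.sqrt 2)
      have hcosh := (Real.hasDerivAt_cosh ((x - t) / Real.sqrt 2)).comp t hinner
      have hlog := hcosh.log (Real.cosh_pos _).ne'
      have hfinal := (hlog.const_mul (Real.sqrt 2)).neg
      refine hfinal.congr_deriv ?_
      rw [Function.comp_apply]
      rw [Real.tanh_eq_sinh_div_cosh]
      have hc := Real.cosh_pos ((x - t) / Real.sqrt 2)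
      field_simp
    rw [intervalIntegral.integral_eq_sub_of_hasDerivAt hderiv ((continuous_tanh'.comp
      ((continuous_const.sub continuous_id).div_const _)).intervalIntegrable _ _)]
    have : x - (-4 : ℝ) = x + 4 := by ring
    simp [sub_self, this, Real.cosh_zero]
  have F2 : (∫ t in x..(8:ℝ), Real.tanh ((t - x) / Real.sqrt 2))
      = Real.sqrt 2 * Real.log (Real.cosh ((8 - x) / Real.sqrt 2)) := by
    have hderiv : ∀ t ∈ Set.uIcc x (8:ℝ),
        HasDerivAt (fun t => Real.sqrt 2 * Real.log (Real.cosh ((t - x) / Real.sqrt 2)))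
          (Real.tanh ((t - x) / Real.sqrt 2)) t := by
      intro t _
      have hinner : HasDerivAt (fun t : ℝ => (t - x) / Real.sqrt 2)
          (1 / Real.sqrt 2) t := by
        simpa using ((hasDerivAt_id t).sub_const x).div_const (Real.sqrt 2)
      have hcosh := (Real.hasDerivAt_cosh ((t - x) / Real.sqrt 2)).comp t hinner
      have hlog := hcosh.log (Real.cosh_pos _).ne'
      have hfinal := hlog.const_mul (Real.sqrt 2)
      refine hfinal.congr_deriv ?_
      rw [Function.comp_apply]
      rw [Real.tanh_eq_sinh_div_cosh]
      have hc := Real.cosh_pos ((t - x) / Real.sqrt 2)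
      field_simp
    rw [intervalIntegral.integral_eq_sub_of_hasDerivAt hderiv ((continuous_tanh'.comp
      ((continuous_id.sub continuous_const).div_const _)).intervalIntegrable _ _)]
    simp [sub_self, Real.cosh_zero]
  rw [F1, F2]
  set w := Real.exp ((x + 4) / Real.sqrt 2) with hw
  set u := Real.exp ((8 - x) / Real.sqrt 2) with hu
  have hwpos : 0 < w := Real.exp_pos _
  have hupos : 0 < u := Real.exp_pos _
  have e1 : Real.exp (Real.sqrt 2 * (x + 4)) = w ^ 2 := by
    rw [hw, ← Real.exp_nat_mul]
    congr 1
    push_cast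
    field_simp
    linear_combination (x + 4) * hss
  have e2 : Real.exp (Real.sqrt 2 * (x - 8)) = (u ^ 2)⁻¹ := by
    rw [hu, ← Real.exp_nat_mul, ← Real.exp_neg]
    congr 1
    push_cast
    field_simp
    linear_combination (x - 8) * hss
  have e3 : Real.exp (Real.sqrt 2 * (x - 2)) = w * u⁻¹ := by
    rw [hw, hu, ← Real.exp_neg, ← Real.exp_add]
    congr 1
    field_simp
    linear_combination (x - 2) * hss
  have c1 : Real.cosh ((x + 4) / Real.sqrt 2) = (w + w⁻¹) / 2 := by
    rw [Real.cosh_eq, ← Real.exp_neg]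
  have c2 : Real.cosh ((8 - x) / Real.sqrt 2) = (u + u⁻¹) / 2 := by
    rw [Real.cosh_eq, ← Real.exp_neg]
  have key : (1 / 4 : ℝ) * (Real.exp (Real.sqrt 2 * (x - 8)) + 1) *
      (Real.exp (Real.sqrt 2 * (x + 4)) + 1)
      = Real.cosh ((x + 4) / Real.sqrt 2) * Real.cosh ((8 - x) / Real.sqrt 2) *
        Real.exp (Real.sqrt 2 * (x - 2)) := by
    rw [e1, e2, e3, c1, c2]
    field_simp
    ring
  rw [key]
  have hc1 := Real.cosh_pos ((x + 4) / Real.sqrt 2)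
  have hc2 := Real.cosh_pos ((8 - x) / Real.sqrt 2)
  rw [Real.log_mul (by positivity) (Real.exp_pos _).ne',
    Real.log_mul hc1.ne' hc2.ne', Real.log_exp]
  linear_combination (2 - x) * hss
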